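/- arXiv:2212.06000 — 5 statements merged into one kernel-verified Lean document; each statement's English description precedes it below -/
import Mathlib

section
/- Let p ∈ [1,∞), let d be a metric on a set X, fix x₀ ∈ X and write |x| := d(x, x₀). Then for all x, y ∈ X, |d(x,y)^p − |y|^p| ≤ p·2^(p−1)·(|x|·|y|^(p−1) + |x|^p). -/
open Real

lemma rpow_sub_rpow_le_aux {a b p : ℝ} (hb : 0 ≤ b) (hba : b ≤ a) (hp : 1 ≤ p) :
    a ^ p - b ^ p ≤ p * a ^ (p - 1) * (a - b) := by
  have ha : 0 ≤ a := hb.trans hba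
  rcases eq_or_lt_of_le ha with h | ha
  · have hb0 : b = 0 := le_antisymm (hba.trans h.symm.le) hb
    subst hb0
    simp [← h, Real.zero_rpow (by linarith : p ≠ 0)]
  · set s : ℝ := b / a - 1 with hs
    have hs1 : -1 ≤ s := by
      have : 0 ≤ b / a := div_nonneg hb ha.le
      simp [hs]; linarith
    have hbern := one_add_mul_self_le_rpow_one_add hs1 hp
    have h1s : 1 + s = b / a := by ring
    rw [h1s, Real.div_rpow hb ha.le] at hbern
    -- hbern : 1 + p * s ≤ b^p / a^p
    have hap : 0 < a ^ p := Real.rpow_pos_of_pos ha p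
    have h2 : (1 + p * s) * a ^ p ≤ b ^ p := by
      rw [← le_div_iff₀ hap]; exact hbern
    have h3 : a ^ p * s = a ^ (p - 1) * (b - a) := by
      have : a ^ p = a ^ (p - 1) * a := by
        rw [← Real.rpow_add_one ha.ne' (p - 1)]; ring_nf
      rw [this, hs]
      field_simp
    nlinarith [h2, h3]

lemma abs_rpow_sub_rpow_le {a b p : ℝ} (ha : 0 ≤ a) (hb : 0 ≤ b) (hp : 1 ≤ p) :
    |a ^ p - b ^ p| ≤ p * max a b ^ (p - 1) * |a - b| := by
  rcases le_total b a with h | h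
  · rw [abs_of_nonneg (by linarith : (0:ℝ) ≤ a - b), max_eq_left h,
      abs_of_nonneg (sub_nonneg.mpr (Real.rpow_le_rpow hb h (by linarith)))]
    exact rpow_sub_rpow_le_aux hb h hp
  · rw [abs_of_nonpos (by linarith : a - b ≤ 0), max_eq_right h,
      abs_of_nonpos (sub_nonpos.mpr (Real.rpow_le_rpow ha h (by linarith))), neg_sub, neg_sub]
    exact rpow_sub_rpow_le_aux ha h hp

/-- Lemma 5.3 of the paper: for a metric space `X` with
reference point `x₀` (writing `|x| := d(x, x₀)`) and `p ≥ 1`, for all `x, y`: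
`|d(x,y)^p − |y|^p| ≤ p·2^(p−1)·(|x|·|y|^(p−1) + |x|^p)`. -/
theorem dist_rpow_sub_rpow_abs_le
    {X : Type*} [MetricSpace X] (x₀ : X) (p : ℝ) (hp : 1 ≤ p) :
    ∀ x y : X,
      |dist x y ^ p - dist y x₀ ^ p| ≤
        p * 2 ^ (p - 1) *
          (dist x x₀ * dist y x₀ ^ (p - 1) + dist x x₀ ^ p) := by
  intro x y
  set a := dist x y
  set b := dist y x₀
  set c := dist x x₀
  have ha : 0 ≤ a := dist_nonneg
  have hb : 0 ≤ b := dist_nonneg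
  have hc : 0 ≤ c := dist_nonneg
  have hq : 0 ≤ p - 1 := by linarith
  have hab : |a - b| ≤ c := by
    have := abs_dist_sub_le x x₀ y
    rwa [dist_comm x₀ y] at this
  have hmax : max a b ≤ b + c := by
    refine max_le ?_ (by linarith)
    have := dist_triangle x y x₀  -- wrong direction; need a ≤ b + c
    calc a ≤ dist x x₀ + dist x₀ y := dist_triangle x x₀ y
    _ = b + c := by rw [dist_comm x₀ y]; ring
  have key := abs_rpow_sub_rpow_le ha hb hp
  have hm0 : 0 ≤ max a b := le_trans ha (le_max_left a b)
  have h2 : max a b ^ (p - 1) ≤ 2 ^ (p - 1) * (b ^ (p - 1) + c ^ (p - 1)) := by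
    have h3 : max a b ^ (p - 1) ≤ (b + c) ^ (p - 1) := Real.rpow_le_rpow hm0 hmax hq
    have h4 : (b + c) ^ (p - 1) ≤ (2 * max b c) ^ (p - 1) := by
      refine Real.rpow_le_rpow (by linarith) ?_ hq
      rcases le_total b c with h | h
      · rw [max_eq_right h]; linarith
      · rw [max_eq_left h]; linarith
    have h5 : (2 * max b c) ^ (p - 1) = 2 ^ (p - 1) * max b c ^ (p - 1) :=
      Real.mul_rpow (by norm_num) (le_trans hb (le_max_left b c))
    have h6 : max b c ^ (p - 1) ≤ b ^ (p - 1) + c ^ (p - 1) := by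
      rcases le_total b c with h | h
      · rw [max_eq_right h]
        nlinarith [Real.rpow_nonneg hb (p - 1)]
      · rw [max_eq_left h]
        nlinarith [Real.rpow_nonneg hc (p - 1)]
    calc max a b ^ (p - 1) ≤ (2 * max b c) ^ (p - 1) := h3.trans h4
    _ = 2 ^ (p - 1) * max b c ^ (p - 1) := h5
    _ ≤ 2 ^ (p - 1) * (b ^ (p - 1) + c ^ (p - 1)) := by
        have h2p : (0:ℝ) ≤ 2 ^ (p - 1) := Real.rpow_nonneg (by norm_num) _
        nlinarith
  have hcp : c ^ p = c * c ^ (p - 1) := by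
    have := Real.rpow_one_add' hc (by linarith : (1:ℝ) + (p - 1) ≠ 0)
    rw [show (1:ℝ) + (p - 1) = p by ring] at this
    exact this
  have hp0 : 0 < p := by linarith
  have hmq : 0 ≤ max a b ^ (p - 1) := Real.rpow_nonneg hm0 _
  calc |a ^ p - b ^ p| ≤ p * max a b ^ (p - 1) * |a - b| := key
  _ ≤ p * (2 ^ (p - 1) * (b ^ (p - 1) + c ^ (p - 1))) * c := by
      have := mul_le_mul h2 hab (abs_nonneg _) (Real.rpow_nonneg (by norm_num : (0:ℝ) ≤ 2) _ |> fun h => mul_nonneg h (by positivity))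
      nlinarith [abs_nonneg (a - b), Real.rpow_nonneg hb (p-1), Real.rpow_nonneg hc (p-1)]
  _ = p * 2 ^ (p - 1) * (c * b ^ (p - 1) + c ^ p) := by rw [hcp]; ring
end

section
/- Let μ, μ' be probability measures on X with H(μ'|μ) < ∞, ν, ν' probability measures on Y with H(ν'|ν) < ∞, and c : X×Y → ℝ measurable. Suppose π ∈ Π(μ,ν) with dπ = exp(f⊕g − c) d(μ⊗ν) and π' ∈ Π(μ',ν') with dπ' = exp(f'⊕g' − c) d(μ'⊗ν'), where f, f' : X → ℝ and g, g' : Y → ℝ are measurable, f'−f is integrable with respect to μ and μ', and g'−g is integrable with respect to ν and ν'. Then H(π'|π) + H(π|π') = H(μ'|μ) + H(μ|μ') + H(ν'|ν) + H(ν|ν') + ∫(f'−f) d(μ'−μ) + ∫(g'−g) d(ν'−ν) (with the convention that both sides may equal +∞ simultaneously). -/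
open MeasureTheory Real
open scoped Classical ENNReal

/-- Relative entropy (Kullback–Leibler divergence) `H(μ'|μ)`, with value `⊤`
if `μ'` is not absolutely continuous w.r.t. `μ` or the (positive part of the)
log-density is not integrable. -/
noncomputable def relEnt {X : Type*} [MeasurableSpace X]
    (μ' μ : Measure X) : EReal :=
  if μ' ≪ μ ∧ Integrable (fun x => Real.log (μ'.rnDeriv μ x).toReal) μ' then
    ((∫ x, Real.log (μ'.rnDeriv μ x).toReal ∂μ' : ℝ) : EReal)
  else ⊤

namespace RelEntAux

variable {X Y Z : Type*} [MeasurableSpace X] [MeasurableSpace Y] [MeasurableSpace Z]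

lemma ae_fst {P : Measure (X × Y)} {μ : Measure X} (hmap : P.map Prod.fst = μ)
    {p : X → Prop} (hp : MeasurableSet {x | p x}) (h : ∀ᵐ x ∂μ, p x) :
    ∀ᵐ z ∂P, p z.1 := by
  rw [← hmap] at h
  exact (MeasureTheory.ae_map_iff measurable_fst.aemeasurable hp).mp h

lemma ae_snd {P : Measure (X × Y)} {ν : Measure Y} (hmap : P.map Prod.snd = ν)
    {p : Y → Prop} (hp : MeasurableSet {y | p y}) (h : ∀ᵐ y ∂ν, p y) :
    ∀ᵐ z ∂P, p z.2 := by
  rw [← hmap] at h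
  exact (MeasureTheory.ae_map_iff measurable_snd.aemeasurable hp).mp h

lemma integrable_fst_iff {P : Measure (X × Y)} {μ : Measure X} (hmap : P.map Prod.fst = μ)
    {φ : X → ℝ} (hφ : AEStronglyMeasurable φ μ) :
    Integrable (fun z => φ z.1) P ↔ Integrable φ μ := by
  subst hmap
  exact (integrable_map_measure hφ measurable_fst.aemeasurable).symm

lemma integrable_snd_iff {P : Measure (X × Y)} {ν : Measure Y} (hmap : P.map Prod.snd = ν)
    {ψ : Y → ℝ} (hψ : AEStronglyMeasurable ψ ν) :
    Integrable (fun z => ψ z.2) P ↔ Integrable ψ ν := by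
  subst hmap
  exact (integrable_map_measure hψ measurable_snd.aemeasurable).symm

lemma integral_fst_eq {P : Measure (X × Y)} {μ : Measure X} (hmap : P.map Prod.fst = μ)
    {φ : X → ℝ} (hφ : AEStronglyMeasurable φ μ) :
    ∫ z, φ z.1 ∂P = ∫ x, φ x ∂μ := by
  subst hmap
  exact (integral_map measurable_fst.aemeasurable hφ).symm

lemma integral_snd_eq {P : Measure (X × Y)} {ν : Measure Y} (hmap : P.map Prod.snd = ν)
    {ψ : Y → ℝ} (hψ : AEStronglyMeasurable ψ ν) :
    ∫ z, ψ z.2 ∂P = ∫ y, ψ y ∂ν := by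
  subst hmap
  exact (integral_map measurable_snd.aemeasurable hψ).symm

lemma prod_withDensity_eq {μ μ' : Measure X} {ν ν' : Measure Y}
    [SigmaFinite μ] [SigmaFinite ν] [SigmaFinite μ'] [SigmaFinite ν']
    {r₁ : X → ℝ≥0∞} {r₂ : Y → ℝ≥0∞} (h₁ : Measurable r₁) (h₂ : Measurable r₂)
    (hμ' : μ' = μ.withDensity r₁) (hν' : ν' = ν.withDensity r₂) :
    μ'.prod ν' = (μ.prod ν).withDensity (fun z => r₁ z.1 * r₂ z.2) := by
  refine Measure.prod_eq fun s t hs ht => ?_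
  rw [hμ', hν', withDensity_apply _ (hs.prod ht), ← Measure.prod_restrict,
    lintegral_prod_mul h₁.aemeasurable h₂.aemeasurable,
    withDensity_apply _ hs, withDensity_apply _ ht]

lemma absolutelyContinuous_withDensity_exp {ρ : Measure Z} {h : Z → ℝ} (hh : Measurable h) :
    ρ ≪ ρ.withDensity (fun z => ENNReal.ofReal (exp (h z))) := by
  have hmeas : Measurable (fun z => ENNReal.ofReal (exp (h z))) :=
    (measurable_exp.comp hh).ennreal_ofReal
  have hinv := withDensity_inv_same (μ := ρ) hmeas
    (ae_of_all _ fun z => (ENNReal.ofReal_pos.mpr (exp_pos _)).ne')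
    (ae_of_all _ fun z => ENNReal.ofReal_ne_top)
  nth_rewrite 1 [← hinv]
  exact withDensity_absolutelyContinuous _ _

lemma fst_ac {μ μ' : Measure X} {ν ν' : Measure Y}
    [IsProbabilityMeasure ν] [SFinite ν'] (h : μ.prod ν ≪ μ'.prod ν') : μ ≪ μ' := by
  intro s hs
  have h0 : (μ'.prod ν') (s ×ˢ Set.univ) = 0 := by
    rw [Measure.prod_prod, hs, zero_mul]
  have h2 := h h0
  rw [Measure.prod_prod, measure_univ, mul_one] at h2
  exact h2

lemma snd_ac {μ μ' : Measure X} {ν ν' : Measure Y}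
    [IsProbabilityMeasure μ] [SFinite ν] [SFinite ν'] (h : μ.prod ν ≪ μ'.prod ν') : ν ≪ ν' := by
  intro s hs
  have h0 : (μ'.prod ν') (Set.univ ×ˢ s) = 0 := by
    rw [Measure.prod_prod, hs, mul_zero]
  have h2 := h h0
  rw [Measure.prod_prod, measure_univ, one_mul] at h2
  exact h2

lemma integrable_negpart_log_rnDeriv {σ τ : Measure Z} [IsFiniteMeasure σ] [IsFiniteMeasure τ]
    (hστ : σ ≪ τ) :
    Integrable (fun z => max (- Real.log (σ.rnDeriv τ z).toReal) 0) σ := by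
  have hmeas : Measurable (fun z => max (- Real.log (σ.rnDeriv τ z).toReal) 0) :=
    ((measurable_log.comp ((Measure.measurable_rnDeriv σ τ).ennreal_toReal)).neg).max
      measurable_const
  refine Integrable.mono' (Measure.integrable_toReal_rnDeriv (μ := τ) (ν := σ))
    hmeas.aestronglyMeasurable ?_
  filter_upwards [Measure.inv_rnDeriv hστ] with z hinv
  simp only [Pi.inv_apply] at hinv
  rw [Real.norm_eq_abs, abs_of_nonneg (le_max_right _ _)]
  have hkey : - Real.log (σ.rnDeriv τ z).toReal = Real.log ((σ.rnDeriv τ z)⁻¹).toReal := by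
    rw [ENNReal.toReal_inv, Real.log_inv]
  rw [hkey, hinv]
  set t := (τ.rnDeriv σ z).toReal with ht
  have htn : (0:ℝ) ≤ t := ENNReal.toReal_nonneg
  have hlog : Real.log t ≤ t := by
    rcases eq_or_lt_of_le htn with h | h
    · simp [← h]
    · linarith [Real.log_le_sub_one_of_pos h]
  exact max_le hlog htn

lemma max_sub_max_neg (a : ℝ) : max a 0 - max (-a) 0 = a := by
  rcases le_total a 0 with h | h
  · rw [max_eq_right h, max_eq_left (by linarith)]; ring
  · rw [max_eq_left h, max_eq_right (by linarith)]; ring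

lemma integrable_fst_of_integrable_add
    {P : Measure (X × Y)} {μ : Measure X} {ν : Measure Y}
    (hm1 : P.map Prod.fst = μ) (hm2 : P.map Prod.snd = ν)
    {A : X → ℝ} {B : Y → ℝ} (hA : Measurable A) (hB : Measurable B)
    (hAB : Integrable (fun z => A z.1 + B z.2) P)
    (hAneg : Integrable (fun x => max (-A x) 0) μ)
    (hBneg : Integrable (fun y => max (-B y) 0) ν) :
    Integrable A μ := by
  have hBmeas : Measurable (fun y => max (-B y) 0) := (hB.neg).max measurable_const
  have hBn : Integrable (fun z => max (-B z.2) 0) P :=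
    (integrable_snd_iff hm2 hBmeas.aestronglyMeasurable).mpr hBneg
  have hpos : Integrable (fun z => max (A z.1) 0) P := by
    refine Integrable.mono' (hAB.abs.add hBn)
      (((hA.comp measurable_fst).max measurable_const).aestronglyMeasurable) ?_
    filter_upwards with z
    rw [Real.norm_eq_abs, abs_of_nonneg (le_max_right _ _)]
    have h1 : A z.1 ≤ |A z.1 + B z.2| + max (-B z.2) 0 := by
      have h2 := le_abs_self (A z.1 + B z.2)
      have h3 := le_max_left (-B z.2) (0:ℝ)
      linarith
    have h4 : (0:ℝ) ≤ |A z.1 + B z.2| + max (-B z.2) 0 := by positivity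
    exact max_le h1 h4
  have hApos : Integrable (fun x => max (A x) 0) μ :=
    (integrable_fst_iff hm1 ((hA.max measurable_const).aestronglyMeasurable)).mp hpos
  have : Integrable (fun x => max (A x) 0 - max (-A x) 0) μ := hApos.sub hAneg
  exact this.congr (ae_of_all _ fun x => max_sub_max_neg (A x))


variable {X Y Z : Type*} [MeasurableSpace X] [MeasurableSpace Y] [MeasurableSpace Z]

lemma relEnt_ne_bot (μ' μ : Measure Z) : relEnt μ' μ ≠ ⊥ := by
  rw [relEnt]
  split_ifs
  · exact EReal.coe_ne_bot _
  · simp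

lemma ereal_sum_top (a b r : ℝ) {x y : EReal} (hx : x ≠ ⊥) (hy : y ≠ ⊥)
    (h : x = ⊤ ∨ y = ⊤) :
    (a : EReal) + x + (b : EReal) + y + (r : EReal) = ⊤ := by
  rcases h with h | h
  · rw [h, EReal.add_top_of_ne_bot (EReal.coe_ne_bot a),
      EReal.top_add_of_ne_bot (EReal.coe_ne_bot b), EReal.top_add_of_ne_bot hy,
      EReal.top_add_of_ne_bot (EReal.coe_ne_bot r)]
  · rw [h]
    have h1 : (a : EReal) + x + (b : EReal) ≠ ⊥ := by
      intro hbot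
      rcases EReal.add_eq_bot_iff.mp hbot with h2 | h2
      · rcases EReal.add_eq_bot_iff.mp h2 with h3 | h3
        · exact EReal.coe_ne_bot a h3
        · exact hx h3
      · exact EReal.coe_ne_bot b h2
    rw [EReal.add_top_of_ne_bot h1, EReal.top_add_of_ne_bot (EReal.coe_ne_bot r)]

lemma coupling_eq_withDensity
    {μ μ' : Measure X} {ν ν' : Measure Y}
    [IsFiniteMeasure μ] [IsFiniteMeasure μ'] [IsFiniteMeasure ν] [IsFiniteMeasure ν']
    (hμ : μ' ≪ μ) (hν : ν' ≪ ν)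
    (c : X × Y → ℝ) (f f' : X → ℝ) (g g' : Y → ℝ)
    {P P' : Measure (X × Y)}
    (hP : P = (μ.prod ν).withDensity
      (fun z => ENNReal.ofReal (exp (f z.1 + g z.2 - c z))))
    (hP' : P' = (μ'.prod ν').withDensity
      (fun z => ENNReal.ofReal (exp (f' z.1 + g' z.2 - c z))))
    (hc : Measurable c) (hf : Measurable f) (hg : Measurable g)
    (hf' : Measurable f') (hg' : Measurable g') :
    P' = P.withDensity (fun z => μ'.rnDeriv μ z.1 * ν'.rnDeriv ν z.2
        * ENNReal.ofReal (exp ((f' z.1 - f z.1) + (g' z.2 - g z.2)))) := by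
  set r₁ := μ'.rnDeriv μ with hr₁
  set r₂ := ν'.rnDeriv ν with hr₂
  have h₁ : Measurable r₁ := Measure.measurable_rnDeriv _ _
  have h₂ : Measurable r₂ := Measure.measurable_rnDeriv _ _
  set D : X × Y → ℝ≥0∞ := fun z => ENNReal.ofReal (exp (f z.1 + g z.2 - c z)) with hD
  have hDmeas : Measurable D :=
    (measurable_exp.comp
      (((hf.comp measurable_fst).add (hg.comp measurable_snd)).sub hc)).ennreal_ofReal
  -- μ.prod ν = P.withDensity D⁻¹
  have hbase : μ.prod ν = P.withDensity (fun z => (D z)⁻¹) := by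
    rw [hP]
    exact (withDensity_inv_same hDmeas
      (ae_of_all _ fun z => (ENNReal.ofReal_pos.mpr (exp_pos _)).ne')
      (ae_of_all _ fun z => ENNReal.ofReal_ne_top)).symm
  -- μ'.prod ν' = (μ.prod ν).withDensity R
  have hprod : μ'.prod ν' = (μ.prod ν).withDensity (fun z => r₁ z.1 * r₂ z.2) :=
    prod_withDensity_eq h₁ h₂ (Measure.withDensity_rnDeriv_eq μ' μ hμ).symm
      (Measure.withDensity_rnDeriv_eq ν' ν hν).symm
  have hRmeas : Measurable (fun z : X × Y => r₁ z.1 * r₂ z.2) :=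
    (h₁.comp measurable_fst).mul (h₂.comp measurable_snd)
  have hD'meas : Measurable (fun z : X × Y => ENNReal.ofReal (exp (f' z.1 + g' z.2 - c z))) := by
    exact (measurable_exp.comp
      (((hf'.comp measurable_fst).add (hg'.comp measurable_snd)).sub hc)).ennreal_ofReal
  have hDinvmeas : Measurable (fun z : X × Y => (D z)⁻¹) := hDmeas.inv
  have key : ∀ z : X × Y, ((fun z => (D z)⁻¹) * ((fun z : X × Y => r₁ z.1 * r₂ z.2) *
      (fun z : X × Y => ENNReal.ofReal (exp (f' z.1 + g' z.2 - c z))))) z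
      = r₁ z.1 * r₂ z.2 * ENNReal.ofReal (exp ((f' z.1 - f z.1) + (g' z.2 - g z.2))) := by
    intro z
    simp only [Pi.mul_apply]
    have hDinv : (D z)⁻¹ = ENNReal.ofReal (exp (-(f z.1 + g z.2 - c z))) := by
      rw [hD, Real.exp_neg, ENNReal.ofReal_inv_of_pos (exp_pos _)]
    rw [hDinv, mul_comm (ENNReal.ofReal _) _, mul_assoc, ← ENNReal.ofReal_mul (exp_nonneg _),
      ← Real.exp_add]
    congr 2
    ring_nf
  calc P' = ((μ.prod ν).withDensity (fun z => r₁ z.1 * r₂ z.2)).withDensity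
        (fun z => ENNReal.ofReal (exp (f' z.1 + g' z.2 - c z))) := by rw [hP', hprod]
    _ = (μ.prod ν).withDensity ((fun z : X × Y => r₁ z.1 * r₂ z.2) *
        (fun z => ENNReal.ofReal (exp (f' z.1 + g' z.2 - c z)))) :=
      (withDensity_mul _ hRmeas hD'meas).symm
    _ = (P.withDensity (fun z => (D z)⁻¹)).withDensity ((fun z : X × Y => r₁ z.1 * r₂ z.2) *
        (fun z => ENNReal.ofReal (exp (f' z.1 + g' z.2 - c z)))) := by rw [← hbase]
    _ = P.withDensity ((fun z => (D z)⁻¹) * ((fun z : X × Y => r₁ z.1 * r₂ z.2) *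
        (fun z => ENNReal.ofReal (exp (f' z.1 + g' z.2 - c z))))) :=
      (withDensity_mul _ hDinvmeas (hRmeas.mul hD'meas)).symm
    _ = P.withDensity (fun z => r₁ z.1 * r₂ z.2
        * ENNReal.ofReal (exp ((f' z.1 - f z.1) + (g' z.2 - g z.2)))) :=
      withDensity_congr_ae (ae_of_all _ key)

lemma log_rnDeriv_ae
    {μ μ' : Measure X} {ν ν' : Measure Y}
    [IsFiniteMeasure μ] [IsFiniteMeasure μ'] [IsFiniteMeasure ν] [IsFiniteMeasure ν']
    (hμ : μ' ≪ μ) (hν : ν' ≪ ν)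
    {u : X → ℝ} {v : Y → ℝ} (hu : Measurable u) (hv : Measurable v)
    {P P' : Measure (X × Y)} [SigmaFinite P]
    (hPP' : P' = P.withDensity (fun z => μ'.rnDeriv μ z.1 * ν'.rnDeriv ν z.2
        * ENNReal.ofReal (exp (u z.1 + v z.2))))
    (hP'1 : P'.map Prod.fst = μ') (hP'2 : P'.map Prod.snd = ν') :
    (fun z => Real.log (P'.rnDeriv P z).toReal)
      =ᵐ[P'] fun z => (Real.log (μ'.rnDeriv μ z.1).toReal + u z.1)
        + (Real.log (ν'.rnDeriv ν z.2).toReal + v z.2) := by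
  set r₁ := μ'.rnDeriv μ with hr₁
  set r₂ := ν'.rnDeriv ν with hr₂
  have h₁ : Measurable r₁ := Measure.measurable_rnDeriv _ _
  have h₂ : Measurable r₂ := Measure.measurable_rnDeriv _ _
  set W : X × Y → ℝ≥0∞ := fun z => r₁ z.1 * r₂ z.2 * ENNReal.ofReal (exp (u z.1 + v z.2))
    with hWdef
  have hWmeas : Measurable W :=
    ((h₁.comp measurable_fst).mul (h₂.comp measurable_snd)).mul
      ((measurable_exp.comp ((hu.comp measurable_fst).add (hv.comp measurable_snd))).ennreal_ofReal)
  have hac : P' ≪ P := by rw [hPP']; exact withDensity_absolutelyContinuous _ _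
  have h1 : P'.rnDeriv P =ᵐ[P] W := by
    rw [hPP']; exact Measure.rnDeriv_withDensity P hWmeas
  have h1' : P'.rnDeriv P =ᵐ[P'] W := hac.ae_eq h1
  have pos₁ : ∀ᵐ z ∂P', 0 < r₁ z.1 :=
    ae_fst hP'1 (measurableSet_lt measurable_const h₁) (Measure.rnDeriv_pos hμ)
  have fin₁ : ∀ᵐ z ∂P', r₁ z.1 ≠ ∞ := by
    refine ae_fst hP'1 ?_ (hμ.ae_le (Measure.rnDeriv_ne_top μ' μ))
    exact (h₁ (measurableSet_singleton ∞)).compl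
  have pos₂ : ∀ᵐ z ∂P', 0 < r₂ z.2 :=
    ae_snd hP'2 (measurableSet_lt measurable_const h₂) (Measure.rnDeriv_pos hν)
  have fin₂ : ∀ᵐ z ∂P', r₂ z.2 ≠ ∞ := by
    refine ae_snd hP'2 ?_ (hν.ae_le (Measure.rnDeriv_ne_top ν' ν))
    exact (h₂ (measurableSet_singleton ∞)).compl
  filter_upwards [h1', pos₁, fin₁, pos₂, fin₂] with z hz hp₁ hf₁ hp₂ hf₂
  rw [hz]
  have ht₁ : (r₁ z.1).toReal ≠ 0 := ENNReal.toReal_ne_zero.mpr ⟨hp₁.ne', hf₁⟩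
  have ht₂ : (r₂ z.2).toReal ≠ 0 := ENNReal.toReal_ne_zero.mpr ⟨hp₂.ne', hf₂⟩
  show Real.log (r₁ z.1 * r₂ z.2 * ENNReal.ofReal (exp (u z.1 + v z.2))).toReal = _
  rw [ENNReal.toReal_mul, ENNReal.toReal_mul, ENNReal.toReal_ofReal (exp_nonneg _),
    Real.log_mul (mul_ne_zero ht₁ ht₂) (exp_ne_zero _), Real.log_mul ht₁ ht₂, Real.log_exp]
  ring

lemma relEnt_eq_of_withDensity
    {μ μ' : Measure X} {ν ν' : Measure Y}
    [IsProbabilityMeasure μ] [IsProbabilityMeasure μ']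
    [IsProbabilityMeasure ν] [IsProbabilityMeasure ν']
    (hμ : μ' ≪ μ) (hν : ν' ≪ ν)
    {u : X → ℝ} {v : Y → ℝ} (hu : Measurable u) (hv : Measurable v)
    {P P' : Measure (X × Y)} [SigmaFinite P] [IsFiniteMeasure P']
    (hPP' : P' = P.withDensity (fun z => μ'.rnDeriv μ z.1 * ν'.rnDeriv ν z.2
        * ENNReal.ofReal (exp (u z.1 + v z.2))))
    (hP'1 : P'.map Prod.fst = μ') (hP'2 : P'.map Prod.snd = ν')
    (hρ₁ : Integrable (fun x => Real.log (μ'.rnDeriv μ x).toReal) μ')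
    (hρ₂ : Integrable (fun y => Real.log (ν'.rnDeriv ν y).toReal) ν')
    (hu' : Integrable u μ') (hv' : Integrable v ν') :
    relEnt P' P = ((∫ x, Real.log (μ'.rnDeriv μ x).toReal ∂μ'
      + ∫ y, Real.log (ν'.rnDeriv ν y).toReal ∂ν'
      + ∫ x, u x ∂μ' + ∫ y, v y ∂ν' : ℝ) : EReal) := by
  have hae := log_rnDeriv_ae hμ hν hu hv hPP' hP'1 hP'2
  have hac : P' ≪ P := by rw [hPP']; exact withDensity_absolutelyContinuous _ _
  set A : X → ℝ := fun x => Real.log (μ'.rnDeriv μ x).toReal + u x with hA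
  set B : Y → ℝ := fun y => Real.log (ν'.rnDeriv ν y).toReal + v y with hB
  have hAmeas : Measurable A :=
    (measurable_log.comp (Measure.measurable_rnDeriv μ' μ).ennreal_toReal).add hu
  have hBmeas : Measurable B :=
    (measurable_log.comp (Measure.measurable_rnDeriv ν' ν).ennreal_toReal).add hv
  have hAint : Integrable A μ' := hρ₁.add hu'
  have hBint : Integrable B ν' := hρ₂.add hv'
  have hAP : Integrable (fun z => A z.1) P' :=
    (integrable_fst_iff hP'1 hAmeas.aestronglyMeasurable).mpr hAint
  have hBP : Integrable (fun z => B z.2) P' :=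
    (integrable_snd_iff hP'2 hBmeas.aestronglyMeasurable).mpr hBint
  have hint : Integrable (fun z => Real.log (P'.rnDeriv P z).toReal) P' :=
    (hAP.add hBP).congr hae.symm
  rw [relEnt, if_pos ⟨hac, hint⟩]
  have : ∫ z, Real.log (P'.rnDeriv P z).toReal ∂P' = ∫ z, (A z.1 + B z.2) ∂P' :=
    integral_congr_ae hae
  rw [this, integral_add hAP hBP, integral_fst_eq hP'1 hAmeas.aestronglyMeasurable,
    integral_snd_eq hP'2 hBmeas.aestronglyMeasurable, hA, hB,
    integral_add hρ₁ hu', integral_add hρ₂ hv']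
  norm_cast
  ring

lemma integrable_log_rnDeriv_parts
    {μ μ' : Measure X} {ν ν' : Measure Y}
    [IsProbabilityMeasure μ] [IsProbabilityMeasure μ']
    [IsProbabilityMeasure ν] [IsProbabilityMeasure ν']
    (hμ : μ' ≪ μ) (hν : ν' ≪ ν)
    {u : X → ℝ} {v : Y → ℝ} (hu : Measurable u) (hv : Measurable v)
    {P P' : Measure (X × Y)} [SigmaFinite P] [IsFiniteMeasure P']
    (hPP' : P' = P.withDensity (fun z => μ'.rnDeriv μ z.1 * ν'.rnDeriv ν z.2
        * ENNReal.ofReal (exp (u z.1 + v z.2))))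
    (hP'1 : P'.map Prod.fst = μ') (hP'2 : P'.map Prod.snd = ν')
    (hu' : Integrable u μ') (hv' : Integrable v ν')
    (hint : Integrable (fun z => Real.log (P'.rnDeriv P z).toReal) P') :
    Integrable (fun x => Real.log (μ'.rnDeriv μ x).toReal) μ'
      ∧ Integrable (fun y => Real.log (ν'.rnDeriv ν y).toReal) ν' := by
  have hae := log_rnDeriv_ae hμ hν hu hv hPP' hP'1 hP'2
  set A : X → ℝ := fun x => Real.log (μ'.rnDeriv μ x).toReal + u x with hA
  set B : Y → ℝ := fun y => Real.log (ν'.rnDeriv ν y).toReal + v y with hB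
  have hAmeas : Measurable A :=
    (measurable_log.comp (Measure.measurable_rnDeriv μ' μ).ennreal_toReal).add hu
  have hBmeas : Measurable B :=
    (measurable_log.comp (Measure.measurable_rnDeriv ν' ν).ennreal_toReal).add hv
  have hAB : Integrable (fun z => A z.1 + B z.2) P' := hint.congr hae
  -- negative parts
  have hρ₁neg := integrable_negpart_log_rnDeriv hμ
  have hρ₂neg := integrable_negpart_log_rnDeriv hν
  have hAneg : Integrable (fun x => max (-A x) 0) μ' := by
    refine Integrable.mono' (hρ₁neg.add hu'.abs)
      ((hAmeas.neg.max measurable_const).aestronglyMeasurable) ?_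
    filter_upwards with x
    rw [Real.norm_eq_abs, abs_of_nonneg (le_max_right _ _)]
    have h1 : -A x ≤ max (-Real.log (μ'.rnDeriv μ x).toReal) 0 + |u x| := by
      have h2 := le_max_left (-Real.log (μ'.rnDeriv μ x).toReal) (0:ℝ)
      have h3 := neg_abs_le (u x)
      simp only [hA]
      nlinarith [abs_nonneg (u x)]
    have h4 : (0:ℝ) ≤ max (-Real.log (μ'.rnDeriv μ x).toReal) 0 + |u x| := by positivity
    exact max_le h1 h4
  have hBneg : Integrable (fun y => max (-B y) 0) ν' := by
    refine Integrable.mono' (hρ₂neg.add hv'.abs)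
      ((hBmeas.neg.max measurable_const).aestronglyMeasurable) ?_
    filter_upwards with y
    rw [Real.norm_eq_abs, abs_of_nonneg (le_max_right _ _)]
    have h1 : -B y ≤ max (-Real.log (ν'.rnDeriv ν y).toReal) 0 + |v y| := by
      have h2 := le_max_left (-Real.log (ν'.rnDeriv ν y).toReal) (0:ℝ)
      have h3 := neg_abs_le (v y)
      simp only [hB]
      nlinarith [abs_nonneg (v y)]
    have h4 : (0:ℝ) ≤ max (-Real.log (ν'.rnDeriv ν y).toReal) 0 + |v y| := by positivity
    exact max_le h1 h4
  have hAint : Integrable A μ' :=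
    integrable_fst_of_integrable_add hP'1 hP'2 hAmeas hBmeas hAB hAneg hBneg
  have hBint : Integrable B ν' := by
    have hBA : Integrable (fun z => B z.2 + A z.1) P' :=
      hAB.congr (ae_of_all _ fun z => by ring)
    have : Integrable (fun w : Y × X => B w.1 + A w.2) (P'.map Prod.swap) := by
      rw [integrable_map_measure ?_ measurable_swap.aemeasurable]
      · exact hBA
      · exact ((hBmeas.comp measurable_fst).add (hAmeas.comp measurable_snd)).aestronglyMeasurable
    refine integrable_fst_of_integrable_add (P := P'.map Prod.swap) ?_ ?_ hBmeas hAmeas this hBneg hAneg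
    · rw [Measure.map_map measurable_fst measurable_swap]; exact hP'2
    · rw [Measure.map_map measurable_snd measurable_swap]; exact hP'1
  constructor
  · have : Integrable (fun x => A x - u x) μ' := hAint.sub hu'
    exact this.congr (ae_of_all _ fun x => by simp [hA])
  · have : Integrable (fun y => B y - v y) ν' := hBint.sub hv'
    exact this.congr (ae_of_all _ fun y => by simp [hB])

end RelEntAux

/-- key identity in Lemma 3.2(a): for couplings
`π ∈ Π(μ,ν)` with `dπ = e^{f⊕g−c} d(μ⊗ν)` and `π' ∈ Π(μ',ν')` with
`dπ' = e^{f'⊕g'−c} d(μ'⊗ν')`, with `H(μ'|μ), H(ν'|ν) < ∞`, `f'−f ∈ L¹(μ)∩L¹(μ')`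
and `g'−g ∈ L¹(ν)∩L¹(ν')`:
`H(π'|π) + H(π|π') = H(μ'|μ) + H(μ|μ') + H(ν'|ν) + H(ν|ν')
  + ∫(f'−f) d(μ'−μ) + ∫(g'−g) d(ν'−ν)`,
as an identity in `(-∞, +∞]` (both sides may equal `+∞` simultaneously). -/
theorem relEnt_sum_couplings_eq
    {X Y : Type*}
    [MeasurableSpace X] [TopologicalSpace X] [PolishSpace X] [BorelSpace X]
    [MeasurableSpace Y] [TopologicalSpace Y] [PolishSpace Y] [BorelSpace Y]
    (μ μ' : Measure X) (ν ν' : Measure Y)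
    [IsProbabilityMeasure μ] [IsProbabilityMeasure μ']
    [IsProbabilityMeasure ν] [IsProbabilityMeasure ν']
    (hHμ : relEnt μ' μ ≠ ⊤) (hHν : relEnt ν' ν ≠ ⊤)
    (c : X × Y → ℝ) (hc : Measurable c)
    (f f' : X → ℝ) (g g' : Y → ℝ)
    (hf : Measurable f) (hf' : Measurable f')
    (hg : Measurable g) (hg' : Measurable g')
    (hfμ : Integrable (fun x => f' x - f x) μ)
    (hfμ' : Integrable (fun x => f' x - f x) μ')
    (hgν : Integrable (fun y => g' y - g y) ν)
    (hgν' : Integrable (fun y => g' y - g y) ν')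
    (P P' : Measure (X × Y))
    [IsProbabilityMeasure P] [IsProbabilityMeasure P']
    (hP : P = (μ.prod ν).withDensity
      (fun z => ENNReal.ofReal (exp (f z.1 + g z.2 - c z))))
    (hP' : P' = (μ'.prod ν').withDensity
      (fun z => ENNReal.ofReal (exp (f' z.1 + g' z.2 - c z))))
    (hP1 : P.map Prod.fst = μ) (hP2 : P.map Prod.snd = ν)
    (hP'1 : P'.map Prod.fst = μ') (hP'2 : P'.map Prod.snd = ν') :
    relEnt P' P + relEnt P P' =
      relEnt μ' μ + relEnt μ μ' + relEnt ν' ν + relEnt ν ν' +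
        ((∫ x, (f' x - f x) ∂μ' - ∫ x, (f' x - f x) ∂μ
          + (∫ y, (g' y - g y) ∂ν' - ∫ y, (g' y - g y) ∂ν) : ℝ) : EReal) := by
  classical
  -- unpack finiteness hypotheses
  have h1 : μ' ≪ μ ∧ Integrable (fun x => Real.log (μ'.rnDeriv μ x).toReal) μ' := by
    by_contra h; rw [relEnt, if_neg h] at hHμ; exact hHμ rfl
  have h2 : ν' ≪ ν ∧ Integrable (fun y => Real.log (ν'.rnDeriv ν y).toReal) ν' := by
    by_contra h; rw [relEnt, if_neg h] at hHν; exact hHν rfl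
  have hEμ : relEnt μ' μ = ((∫ x, Real.log (μ'.rnDeriv μ x).toReal ∂μ' : ℝ) : EReal) := by
    rw [relEnt, if_pos h1]
  have hEν : relEnt ν' ν = ((∫ y, Real.log (ν'.rnDeriv ν y).toReal ∂ν' : ℝ) : EReal) := by
    rw [relEnt, if_pos h2]
  -- structural equation for P'
  have hW' : P' = P.withDensity (fun z => μ'.rnDeriv μ z.1 * ν'.rnDeriv ν z.2
      * ENNReal.ofReal (exp ((fun x => f' x - f x) z.1 + (fun y => g' y - g y) z.2))) := by
    have := RelEntAux.coupling_eq_withDensity h1.1 h2.1 c f f' g g' hP hP' hc hf hg hf' hg'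
    simpa using this
  by_cases hACr : μ ≪ μ' ∧ ν ≪ ν'
  · -- reverse absolute continuity holds
    have hW : P = P'.withDensity (fun z => μ.rnDeriv μ' z.1 * ν.rnDeriv ν' z.2
        * ENNReal.ofReal (exp ((fun x => f x - f' x) z.1 + (fun y => g y - g' y) z.2))) := by
      have := RelEntAux.coupling_eq_withDensity hACr.1 hACr.2 c f' f g' g hP' hP hc hf' hg' hf hg
      simpa using this
    have hfμn : Integrable (fun x => f x - f' x) μ :=
      hfμ.neg.congr (ae_of_all _ fun x => by simp only [Pi.neg_apply]; ring)
    have hgνn : Integrable (fun y => g y - g' y) ν :=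
      hgν.neg.congr (ae_of_all _ fun y => by simp only [Pi.neg_apply]; ring)
    by_cases hIr : Integrable (fun x => Real.log (μ.rnDeriv μ' x).toReal) μ
        ∧ Integrable (fun y => Real.log (ν.rnDeriv ν' y).toReal) ν
    · -- fully finite case
      have e1 := RelEntAux.relEnt_eq_of_withDensity h1.1 h2.1 (hf'.sub hf) (hg'.sub hg)
        hW' hP'1 hP'2 h1.2 h2.2 hfμ' hgν'
      have e2 := RelEntAux.relEnt_eq_of_withDensity hACr.1 hACr.2 (hf.sub hf') (hg.sub hg')
        hW hP1 hP2 hIr.1 hIr.2 hfμn hgνn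
      have hEμ' : relEnt μ μ' = ((∫ x, Real.log (μ.rnDeriv μ' x).toReal ∂μ : ℝ) : EReal) := by
        rw [relEnt, if_pos ⟨hACr.1, hIr.1⟩]
      have hEν' : relEnt ν ν' = ((∫ y, Real.log (ν.rnDeriv ν' y).toReal ∂ν : ℝ) : EReal) := by
        rw [relEnt, if_pos ⟨hACr.2, hIr.2⟩]
      rw [e1, e2, hEμ, hEμ', hEν, hEν']
      have h5 : ∫ x, (f x - f' x) ∂μ = - ∫ x, (f' x - f x) ∂μ := by
        rw [← integral_neg]
        exact integral_congr_ae (ae_of_all _ fun x => (neg_sub _ _).symm)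
      have h6 : ∫ y, (g y - g' y) ∂ν = - ∫ y, (g' y - g y) ∂ν := by
        rw [← integral_neg]
        exact integral_congr_ae (ae_of_all _ fun y => (neg_sub _ _).symm)
      norm_cast
      simp only [Pi.sub_apply]
      rw [h5, h6]
      ring_nf
    · -- integrability fails for the reverse direction: both sides are ⊤
      have eT : relEnt P P' = ⊤ := by
        rw [relEnt, if_neg]
        rintro ⟨hac, hint⟩
        exact hIr (RelEntAux.integrable_log_rnDeriv_parts hACr.1 hACr.2 (hf.sub hf') (hg.sub hg')
          hW hP1 hP2 hfμn hgνn hint)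
      have hor : relEnt μ μ' = ⊤ ∨ relEnt ν ν' = ⊤ := by
        rcases not_and_or.mp hIr with h | h
        · left; rw [relEnt, if_neg (fun hh => h hh.2)]
        · right; rw [relEnt, if_neg (fun hh => h hh.2)]
      rw [eT, EReal.add_top_of_ne_bot (RelEntAux.relEnt_ne_bot _ _), hEμ, hEν]
      exact (RelEntAux.ereal_sum_top _ _ _ (RelEntAux.relEnt_ne_bot _ _) (RelEntAux.relEnt_ne_bot _ _) hor).symm
  · -- absolute continuity fails in the reverse direction: both sides are ⊤
    have hnac : ¬ P ≪ P' := by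
      intro hh
      have hc1 : μ.prod ν ≪ μ'.prod ν' := by
        refine ((RelEntAux.absolutelyContinuous_withDensity_exp (ρ := μ.prod ν)
          (h := fun z => f z.1 + g z.2 - c z)
          (((hf.comp measurable_fst).add (hg.comp measurable_snd)).sub hc)).trans ?_)
        rw [← hP]
        refine hh.trans ?_
        rw [hP']
        exact withDensity_absolutelyContinuous _ _
      exact hACr ⟨RelEntAux.fst_ac hc1, RelEntAux.snd_ac hc1⟩
    have eT : relEnt P P' = ⊤ := by
      rw [relEnt, if_neg (fun hh => hnac hh.1)]
    have hor : relEnt μ μ' = ⊤ ∨ relEnt ν ν' = ⊤ := by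
      rcases not_and_or.mp hACr with h | h
      · left; rw [relEnt, if_neg (fun hh => h hh.1)]
      · right; rw [relEnt, if_neg (fun hh => h hh.1)]
    rw [eT, EReal.add_top_of_ne_bot (RelEntAux.relEnt_ne_bot _ _), hEμ, hEν]
    exact (RelEntAux.ereal_sum_top _ _ _ (RelEntAux.relEnt_ne_bot _ _) (RelEntAux.relEnt_ne_bot _ _) hor).symm
end

section
/- Monotone improvement identity for Sinkhorn: for every t ≥ 0, H(π*|π_{2t}) − H(π*|π_{2t+2}) = H(μ|μ_{2t}) + H(ν|ν_{2t+1}), where μ_{2t} is the first marginal of the Sinkhorn iterate π_{2t} and ν_{2t+1} the second marginal of π_{2t+1}. -/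
open MeasureTheory Real
open scoped Classical ENNReal

private lemma relEnt_withDensity_exp {Z : Type*} [MeasurableSpace Z]
    (m : Measure Z) (a b : Z → ℝ) (ha : Measurable a) (hb : Measurable b)
    (P Q : Measure Z) [SigmaFinite Q]
    (hP : P = m.withDensity (fun z => ENNReal.ofReal (exp (a z))))
    (hQ : Q = m.withDensity (fun z => ENNReal.ofReal (exp (b z))))
    (hne : relEnt P Q ≠ ⊤) :
    (relEnt P Q).toReal = ∫ z, (a z - b z) ∂P ∧
      Integrable (fun z => a z - b z) P := by
  have hcond : P ≪ Q ∧ Integrable (fun z => Real.log ((P.rnDeriv Q z).toReal)) P := by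
    by_contra h
    exact hne (by simp [relEnt, h])
  have hmeas : Measurable (fun z => ENNReal.ofReal (exp (a z - b z))) :=
    ((ha.sub hb).exp).ennreal_ofReal
  have hPQ : P = Q.withDensity (fun z => ENNReal.ofReal (exp (a z - b z))) := by
    rw [hQ, ← withDensity_mul _ (hb.exp.ennreal_ofReal) hmeas, hP]
    congr 1
    funext z
    simp only [Pi.mul_apply]
    rw [← ENNReal.ofReal_mul (exp_nonneg _), ← Real.exp_add]
    ring_nf
  have hrn : P.rnDeriv Q =ᵐ[Q] fun z => ENNReal.ofReal (exp (a z - b z)) := by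
    rw [hPQ]; exact Measure.rnDeriv_withDensity Q hmeas
  have hrnP : P.rnDeriv Q =ᵐ[P] fun z => ENNReal.ofReal (exp (a z - b z)) :=
    hcond.1.ae_eq hrn
  have hlog : (fun z => Real.log ((P.rnDeriv Q z).toReal)) =ᵐ[P]
      fun z => a z - b z := by
    filter_upwards [hrnP] with z hz
    rw [hz, ENNReal.toReal_ofReal (exp_nonneg _), Real.log_exp]
  constructor
  · rw [relEnt, if_pos hcond]
    simp only [EReal.toReal_coe]
    exact integral_congr_ae hlog
  · exact hcond.2.congr hlog

private lemma marginal_fst {X Y : Type*} [MeasurableSpace X] [MeasurableSpace Y]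
    (P : Measure (X × Y)) (μ : Measure X) (h : P.map Prod.fst = μ)
    (f : X → ℝ) (hf : Measurable f) (hfI : Integrable f μ) :
    Integrable (fun z : X × Y => f z.1) P ∧ ∫ z, f z.1 ∂P = ∫ x, f x ∂μ := by
  subst h
  refine ⟨(integrable_map_measure hf.aestronglyMeasurable
    measurable_fst.aemeasurable).mp hfI, ?_⟩
  exact (integral_map measurable_fst.aemeasurable hf.aestronglyMeasurable).symm

private lemma marginal_snd {X Y : Type*} [MeasurableSpace X] [MeasurableSpace Y]
    (P : Measure (X × Y)) (ν : Measure Y) (h : P.map Prod.snd = ν)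
    (f : Y → ℝ) (hf : Measurable f) (hfI : Integrable f ν) :
    Integrable (fun z : X × Y => f z.2) P ∧ ∫ z, f z.2 ∂P = ∫ y, f y ∂ν := by
  subst h
  refine ⟨(integrable_map_measure hf.aestronglyMeasurable
    measurable_snd.aemeasurable).mp hfI, ?_⟩
  exact (integral_map measurable_snd.aemeasurable hf.aestronglyMeasurable).symm

/-- identity of Lemma 4.2: one Sinkhorn double-step improves the
divergence to the optimizer by exactly the marginal entropies:
`H(π*|π_{2t}) − H(π*|π_{2t+2}) = H(μ|μ_{2t}) + H(ν|ν_{2t+1})`.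
Here `φt, ψt` and `φt1, ψt1` are the dual Sinkhorn iterates at steps `t` and `t+1`
(related by the Sinkhorn dual recursion), `P2t, P2t2` the corresponding primal
iterates `π_{2t}, π_{2t+2}`, `Pstar = π*` the optimal coupling with potentials
`(φs, ψs)`, `μ2t` the first marginal of `π_{2t}` (density `e^{φt−φt1}` w.r.t. `μ`)
and `ν2t1` the second marginal of `π_{2t+1}` (density `e^{ψt−ψt1}` w.r.t. `ν`);
all relevant relative entropies are assumed finite. -/
theorem sinkhorn_improvement_identity
    {X Y : Type*}
    [MeasurableSpace X] [TopologicalSpace X] [PolishSpace X] [BorelSpace X]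
    [MeasurableSpace Y] [TopologicalSpace Y] [PolishSpace Y] [BorelSpace Y]
    (μ : Measure X) (ν : Measure Y)
    [IsProbabilityMeasure μ] [IsProbabilityMeasure ν]
    (c : X × Y → ℝ) (hc : Measurable c)
    (φt φt1 φs : X → ℝ) (ψt ψt1 ψs : Y → ℝ)
    (hφt : Measurable φt) (hφt1 : Measurable φt1) (hφs : Measurable φs)
    (hψt : Measurable ψt) (hψt1 : Measurable ψt1) (hψs : Measurable ψs)
    -- the Sinkhorn dual recursion:
    (hdual1 : ∀ y, ψt y = -Real.log (∫ x, exp (φt x - c (x, y)) ∂μ))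
    (hdual2 : ∀ x, φt1 x = -Real.log (∫ y, exp (ψt y - c (x, y)) ∂ν))
    (hdual3 : ∀ y, ψt1 y = -Real.log (∫ x, exp (φt1 x - c (x, y)) ∂μ))
    -- integrability of the dual iterates and potentials:
    (hφtI : Integrable φt μ) (hφt1I : Integrable φt1 μ)
    (hψtI : Integrable ψt ν) (hψt1I : Integrable ψt1 ν)
    (hφsI : Integrable φs μ) (hψsI : Integrable ψs ν)
    -- primal iterates and optimal coupling:
    (P2t P2t2 Pstar : Measure (X × Y))
    [IsProbabilityMeasure P2t] [IsProbabilityMeasure P2t2]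
    [IsProbabilityMeasure Pstar]
    (hP2t : P2t = (μ.prod ν).withDensity
      (fun z => ENNReal.ofReal (exp (φt z.1 + ψt z.2 - c z))))
    (hP2t2 : P2t2 = (μ.prod ν).withDensity
      (fun z => ENNReal.ofReal (exp (φt1 z.1 + ψt1 z.2 - c z))))
    (hPstar : Pstar = (μ.prod ν).withDensity
      (fun z => ENNReal.ofReal (exp (φs z.1 + ψs z.2 - c z))))
    (hPstar1 : Pstar.map Prod.fst = μ) (hPstar2 : Pstar.map Prod.snd = ν)
    -- marginals of the Sinkhorn iterates:
    (μ2t : Measure X) (ν2t1 : Measure Y)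
    [IsProbabilityMeasure μ2t] [IsProbabilityMeasure ν2t1]
    (hμ2t : μ2t = μ.withDensity (fun x => ENNReal.ofReal (exp (φt x - φt1 x))))
    (hν2t1 : ν2t1 = ν.withDensity (fun y => ENNReal.ofReal (exp (ψt y - ψt1 y))))
    (hμ2tfst : P2t.map Prod.fst = μ2t) (hP2tsnd : P2t.map Prod.snd = ν)
    -- finiteness of the relevant relative entropies:
    (h1 : relEnt Pstar P2t ≠ ⊤) (h2 : relEnt Pstar P2t2 ≠ ⊤)
    (h3 : relEnt μ μ2t ≠ ⊤) (h4 : relEnt ν ν2t1 ≠ ⊤) :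
    (relEnt Pstar P2t).toReal - (relEnt Pstar P2t2).toReal =
      (relEnt μ μ2t).toReal + (relEnt ν ν2t1).toReal := by
    -- measurability of the joint densities' exponents
  have mA : Measurable (fun z : X × Y => φs z.1 + ψs z.2 - c z) :=
    ((hφs.comp measurable_fst).add (hψs.comp measurable_snd)).sub hc
  have mB : Measurable (fun z : X × Y => φt z.1 + ψt z.2 - c z) :=
    ((hφt.comp measurable_fst).add (hψt.comp measurable_snd)).sub hc
  have mB2 : Measurable (fun z : X × Y => φt1 z.1 + ψt1 z.2 - c z) :=
    ((hφt1.comp measurable_fst).add (hψt1.comp measurable_snd)).sub hc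
  obtain ⟨e1, i1⟩ := relEnt_withDensity_exp (μ.prod ν) _ _ mA mB Pstar P2t hPstar hP2t h1
  obtain ⟨e2, i2⟩ := relEnt_withDensity_exp (μ.prod ν) _ _ mA mB2 Pstar P2t2 hPstar hP2t2 h2
  obtain ⟨e3, _⟩ := relEnt_withDensity_exp μ (fun _ => (0 : ℝ)) (fun x => φt x - φt1 x)
    measurable_const (hφt.sub hφt1) μ μ2t (by simp) hμ2t h3
  obtain ⟨e4, _⟩ := relEnt_withDensity_exp ν (fun _ => (0 : ℝ)) (fun y => ψt y - ψt1 y)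
    measurable_const (hψt.sub hψt1) ν ν2t1 (by simp) hν2t1 h4
  -- marginal reductions for Pstar
  obtain ⟨iφ1, eφ1⟩ := marginal_fst Pstar μ hPstar1 (fun x => φs x - φt x)
    (hφs.sub hφt) (hφsI.sub hφtI)
  obtain ⟨iψ1, eψ1⟩ := marginal_snd Pstar ν hPstar2 (fun y => ψs y - ψt y)
    (hψs.sub hψt) (hψsI.sub hψtI)
  obtain ⟨iφ2, eφ2⟩ := marginal_fst Pstar μ hPstar1 (fun x => φs x - φt1 x)
    (hφs.sub hφt1) (hφsI.sub hφt1I)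
  obtain ⟨iψ2, eψ2⟩ := marginal_snd Pstar ν hPstar2 (fun y => ψs y - ψt1 y)
    (hψs.sub hψt1) (hψsI.sub hψt1I)
  have E1 : (relEnt Pstar P2t).toReal =
      ∫ x, (φs x - φt x) ∂μ + ∫ y, (ψs y - ψt y) ∂ν := by
    rw [e1, show (fun z : X × Y =>
        (φs z.1 + ψs z.2 - c z) - (φt z.1 + ψt z.2 - c z)) =
        (fun z : X × Y => (φs z.1 - φt z.1) + (ψs z.2 - ψt z.2)) from
      funext fun z => by ring]
    rw [integral_add iφ1 iψ1, eφ1, eψ1]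
  have E2 : (relEnt Pstar P2t2).toReal =
      ∫ x, (φs x - φt1 x) ∂μ + ∫ y, (ψs y - ψt1 y) ∂ν := by
    rw [e2, show (fun z : X × Y =>
        (φs z.1 + ψs z.2 - c z) - (φt1 z.1 + ψt1 z.2 - c z)) =
        (fun z : X × Y => (φs z.1 - φt1 z.1) + (ψs z.2 - ψt1 z.2)) from
      funext fun z => by ring]
    rw [integral_add iφ2 iψ2, eφ2, eψ2]
  have E3 : (relEnt μ μ2t).toReal = ∫ x, (φt1 x - φt x) ∂μ := by
    rw [e3]; exact integral_congr_ae (ae_of_all _ fun x => by ring)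
  have E4 : (relEnt ν ν2t1).toReal = ∫ y, (ψt1 y - ψt y) ∂ν := by
    rw [e4]; exact integral_congr_ae (ae_of_all _ fun y => by ring)
  rw [E1, E2, E3, E4,
    integral_sub hφsI hφtI, integral_sub hψsI hψtI,
    integral_sub hφsI hφt1I, integral_sub hψsI hψt1I,
    integral_sub hφt1I hφtI, integral_sub hψt1I hψtI]
  ring
end

section
/- Comparison step for the Sinkhorn difference equation: let κ² > 0 and suppose G : ℕ → ℝ≥0 solves G(t+1) − G(t) = −κ²·G(t+1)² for t ≥ t₁, with initial value G(t₁) ≤ 1/(2κ²). Then G is nonincreasing and G(t) ≤ 1/(G(t₁)^{−1} + (κ²/2)·(t − t₁)) for all t ≥ t₁. -/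
/-- if `κ > 0` and a nonnegative `G : ℕ → ℝ` solves
`G(t+1) − G(t) = −κ²·G(t+1)²` for `t ≥ t₁` with `G(t₁) ≤ 1/(2κ²)`, then `G` is
nonincreasing on `{t₁, t₁+1, …}` and
`G(t) ≤ 1/(G(t₁)⁻¹ + (κ²/2)·(t − t₁))` for all `t ≥ t₁`. -/
theorem sinkhorn_comparison_step
    (κ : ℝ) (hκ : 0 < κ) (t₁ : ℕ) (G : ℕ → ℝ) (hG0 : ∀ t, 0 ≤ G t)
    (hrec : ∀ t, t₁ ≤ t → G (t + 1) - G t = -(κ ^ 2 * G (t + 1) ^ 2))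
    (hinit : G t₁ ≤ 1 / (2 * κ ^ 2)) :
    (∀ s t, t₁ ≤ s → s ≤ t → G t ≤ G s) ∧
    (∀ t, t₁ ≤ t → G t ≤ 1 / ((G t₁)⁻¹ + κ ^ 2 / 2 * ((t : ℝ) - t₁))) := by
  have hκ2 : (0:ℝ) < κ ^ 2 := by positivity
  have hstep : ∀ t, t₁ ≤ t → G (t + 1) ≤ G t := by
    intro t ht
    have h := hrec t ht
    nlinarith [sq_nonneg (G (t + 1))]
  have hmono : ∀ s t, t₁ ≤ s → s ≤ t → G t ≤ G s := by
    intro s t hs hst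
    induction t, hst using Nat.le_induction with
    | base => exact le_refl _
    | succ n hn ih => exact le_trans (hstep n (le_trans hs hn)) ih
  refine ⟨hmono, ?_⟩
  by_cases h0 : G t₁ = 0
  · have hz : ∀ t, t₁ ≤ t → G t = 0 := by
      intro t ht
      induction t, ht using Nat.le_induction with
      | base => exact h0
      | succ n hn ih =>
        have h := hrec n hn
        nlinarith [hG0 (n + 1), sq_nonneg (G (n + 1))]
    intro t ht
    rw [hz t ht, h0]
    have htc : (t₁ : ℝ) ≤ (t : ℝ) := by exact_mod_cast ht
    have : (0:ℝ)⁻¹ + κ ^ 2 / 2 * ((t : ℝ) - t₁) = κ ^ 2 / 2 * ((t : ℝ) - t₁) := by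
      simp
    rw [this]
    apply div_nonneg (by norm_num)
    nlinarith
  · have hpos1 : 0 < G t₁ := lt_of_le_of_ne (hG0 t₁) (Ne.symm h0)
    have hκG : κ ^ 2 * G t₁ ≤ 1 / 2 := by
      rw [le_div_iff₀ (by positivity)] at hinit
      nlinarith
    have key : ∀ t, t₁ ≤ t →
        0 < G t ∧ (G t₁)⁻¹ + κ ^ 2 / 2 * ((t : ℝ) - t₁) ≤ (G t)⁻¹ := by
      intro t ht
      induction t, ht using Nat.le_induction with
      | base => exact ⟨hpos1, by simp⟩
      | succ n hn ih =>
        obtain ⟨hposn, hinv⟩ := ih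
        have hr := hrec n hn
        have hle : G (n + 1) ≤ G t₁ := hmono t₁ (n + 1) le_rfl (by omega)
        have hb1 : κ ^ 2 * G (n + 1) ^ 2 ≤ κ ^ 2 * G t₁ * G (n + 1) := by
          nlinarith [mul_nonneg (mul_nonneg hκ2.le (hG0 (n + 1))) (sub_nonneg.2 hle)]
        have hb2 : κ ^ 2 * G t₁ * G (n + 1) ≤ 1 / 2 * G (n + 1) := by
          nlinarith [hG0 (n + 1)]
        have h32 : G n ≤ 3 / 2 * G (n + 1) := by nlinarith
        have hposn1 : 0 < G (n + 1) := by nlinarith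
        have hdiff : (G (n + 1))⁻¹ - (G n)⁻¹
            = (G n - G (n + 1)) / (G n * G (n + 1)) := by
          field_simp
        have hge : κ ^ 2 / 2 ≤ (G n - G (n + 1)) / (G n * G (n + 1)) := by
          rw [le_div_iff₀ (by positivity)]
          nlinarith [mul_nonneg (mul_nonneg hκ2.le hposn1.le)
            (sub_nonneg.2 (show G n ≤ 2 * G (n + 1) by nlinarith))]
        have hkey : (G n)⁻¹ + κ ^ 2 / 2 ≤ (G (n + 1))⁻¹ := by linarith [hdiff ▸ hge]
        refine ⟨hposn1, ?_⟩
        have hcast : ((n + 1 : ℕ) : ℝ) = (n : ℝ) + 1 := by push_cast; ring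
        calc (G t₁)⁻¹ + κ ^ 2 / 2 * (((n + 1 : ℕ) : ℝ) - t₁)
            = ((G t₁)⁻¹ + κ ^ 2 / 2 * ((n : ℝ) - t₁)) + κ ^ 2 / 2 := by
              rw [hcast]; ring
          _ ≤ (G n)⁻¹ + κ ^ 2 / 2 := by linarith
          _ ≤ (G (n + 1))⁻¹ := hkey
    intro t ht
    obtain ⟨hp, hi⟩ := key t ht
    have htc : (t₁ : ℝ) ≤ (t : ℝ) := by exact_mod_cast ht
    have hApos : 0 < (G t₁)⁻¹ + κ ^ 2 / 2 * ((t : ℝ) - t₁) := by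
      have : 0 < (G t₁)⁻¹ := inv_pos.2 hpos1
      nlinarith
    calc G t = ((G t)⁻¹)⁻¹ := (inv_inv _).symm
      _ ≤ ((G t₁)⁻¹ + κ ^ 2 / 2 * ((t : ℝ) - t₁))⁻¹ := by
          exact inv_anti₀ hApos hi
      _ = 1 / ((G t₁)⁻¹ + κ ^ 2 / 2 * ((t : ℝ) - t₁)) := (one_div _).symm
end

section
/- Conjugate functions inherit the modulus of continuity of the cost: let ω : ℝ≥0 → ℝ≥0 be concave and nondecreasing, and suppose the cost c : X × Y → ℝ satisfies |c(x,y₁) − c(x,y₂)| ≤ ω(d_Y(y₁,y₂)) for all y₁, y₂ ∈ Y and x ∈ X. For f : X → ℝ with well-defined conjugate f^c(y) = −log ∫ exp(f(x) − c(x,y)) dμ(x), one has |f^c(y₁) − f^c(y₂)| ≤ ω(d_Y(y₁,y₂)) for all y₁, y₂ ∈ Y. -/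
open MeasureTheory Real

/-- first part of Lemma 5.8: if the cost `c` satisfies
`|c(x,y₁) − c(x,y₂)| ≤ ω(d_Y(y₁,y₂))` for a concave nondecreasing
`ω : ℝ≥0 → ℝ≥0`, then the conjugate `f^c(y) = −log ∫ exp(f(x) − c(x,y)) dμ(x)`
satisfies `|f^c(y₁) − f^c(y₂)| ≤ ω(d_Y(y₁,y₂))`. -/
theorem conjugate_modulus_of_continuity
    {X Y : Type*} [MeasurableSpace X] [MetricSpace Y] [MeasurableSpace Y] [BorelSpace Y]
    (μ : Measure X) [IsProbabilityMeasure μ]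
    (ω : ℝ → ℝ) (hω0 : ∀ s, 0 ≤ s → 0 ≤ ω s)
    (hωconc : ConcaveOn ℝ (Set.Ici 0) ω) (hωmono : MonotoneOn ω (Set.Ici 0))
    (c : X × Y → ℝ) (hc : Measurable c)
    (hcω : ∀ (x : X) (y₁ y₂ : Y), |c (x, y₁) - c (x, y₂)| ≤ ω (dist y₁ y₂))
    (f : X → ℝ) (hf : Measurable f)
    (hint : ∀ y : Y, Integrable (fun x => exp (f x - c (x, y))) μ)
    (fc : Y → ℝ)
    (hfc : ∀ y, fc y = -Real.log (∫ x, exp (f x - c (x, y)) ∂μ)) :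
    ∀ y₁ y₂ : Y, |fc y₁ - fc y₂| ≤ ω (dist y₁ y₂) := by
  -- positivity of integrals
  have hpos : ∀ y : Y, 0 < ∫ x, exp (f x - c (x, y)) ∂μ := by
    intro y
    have := integral_exp_pos (μ := μ) (f := fun x => f x - c (x, y)) (hint y)
    exact this
  -- key inequality
  have key : ∀ y₁ y₂ : Y,
      Real.log (∫ x, exp (f x - c (x, y₁)) ∂μ)
        ≤ ω (dist y₁ y₂) + Real.log (∫ x, exp (f x - c (x, y₂)) ∂μ) := by
    intro y₁ y₂
    have hI : (∫ x, exp (f x - c (x, y₁)) ∂μ)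
        ≤ exp (ω (dist y₁ y₂)) * ∫ x, exp (f x - c (x, y₂)) ∂μ := by
      rw [← integral_const_mul]
      refine integral_mono (hint y₁) ((hint y₂).const_mul _) (fun x => ?_)
      have h1 : c (x, y₂) - c (x, y₁) ≤ ω (dist y₁ y₂) := by
        have := hcω x y₁ y₂
        have := abs_le.1 this
        linarith [this.1]
      calc exp (f x - c (x, y₁))
          = exp (c (x, y₂) - c (x, y₁)) * exp (f x - c (x, y₂)) := by
            rw [← Real.exp_add]; ring_nf
        _ ≤ exp (ω (dist y₁ y₂)) * exp (f x - c (x, y₂)) := by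
            exact mul_le_mul_of_nonneg_right (Real.exp_le_exp.2 h1) (Real.exp_nonneg _)
    calc Real.log (∫ x, exp (f x - c (x, y₁)) ∂μ)
        ≤ Real.log (exp (ω (dist y₁ y₂)) * ∫ x, exp (f x - c (x, y₂)) ∂μ) :=
          Real.log_le_log (hpos y₁) hI
      _ = ω (dist y₁ y₂) + Real.log (∫ x, exp (f x - c (x, y₂)) ∂μ) := by
          rw [Real.log_mul (Real.exp_ne_zero _) (ne_of_gt (hpos y₂)), Real.log_exp]
  intro y₁ y₂
  rw [hfc y₁, hfc y₂]
  rw [abs_le]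
  have h1 := key y₁ y₂
  have h2 := key y₂ y₁
  rw [dist_comm y₂ y₁] at h2
  constructor <;> linarith
end
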